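/- In the extended model with transmission success probability p ∈ (0, 1], write p̄ = 1 − p and for each l ≥ 0 let S_l = (1/(aBN))·Σ_{k=1}^{aBN} α^{[l]}_k denote the mean of the l-failure sequence over one period. Then the series E := Σ_{l=0}^{∞} p·p̄^l·S_l converges, and (B' + N' − n)/2 + K + (p̄/p)·N' − a·b/2 ≤ E ≤ (B' + N' − n)/2 + K + (p̄/p)·N' + a·b/2. -/

import Mathlib

/-- The `l`-failure Age-of-Information sequence of the extended model. -/
def aoiExt (A' B' N' ΔB ΔN : ℤ) (l k : ℕ) : ℤ :=
  2 + (l : ℤ) * N' + ((k : ℤ) * A' - ΔN - 1) % N' +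
    (((k : ℤ) * A' - ΔB - 2 - (l : ℤ) * N') % B' -
      ((k : ℤ) * A' - ΔN - 1) % N') % B'

/-- The constant `K = 2 + (Δ_N + 1) %̄ n` where `x %̄ m = ⌈x/m⌉·m − x`. -/
def extK (ΔN n : ℕ) : ℤ :=
  2 + (⌈(((ΔN : ℚ) + 1)) / (n : ℚ)⌉ * n - ((ΔN : ℤ) + 1))

/-- The mean of the `l`-failure AoI sequence of the extended model over one
period, as a real number. -/
noncomputable def meanAoiExt (A B N a b n ΔB ΔN : ℕ) (l : ℕ) : ℝ :=
  (1 / ((a : ℝ) * B * N)) *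
    ∑ k ∈ Finset.Icc 1 (a * B * N),
      ((aoiExt (A * b * n : ℤ) (B * a * b : ℤ) (N * a * n : ℤ)
          (ΔB : ℤ) (ΔN : ℤ) l k : ℤ) : ℝ)


open Finset

lemma emod_mul_add {g B x r : ℤ} (hg : 0 < g) (hB : 0 < B) (hr0 : 0 ≤ r) (hrg : r < g) :
    (g * x + r) % (g * B) = g * (x % B) + r := by
  conv_lhs => rw [show g * x + r = g * (x % B) + r + (g * B) * (x / B) by
    rw [Int.emod_def]; ring]
  rw [Int.add_mul_emod_self_left]
  apply Int.emod_eq_of_lt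
  · have := Int.emod_nonneg x hB.ne'
    positivity
  · have h1 : x % B ≤ B - 1 := by have := Int.emod_lt_of_pos x hB; omega
    nlinarith
lemma sum_emod_range {B : ℕ} (hB : 0 < B) (e w : ℤ) (he : IsCoprime ((B : ℕ) : ℤ) e) :
    ∑ j ∈ range B, (w + (j : ℤ) * e) % (B : ℤ) = ∑ m ∈ range B, (m : ℤ) := by
  have hBZ : (0:ℤ) < (B:ℤ) := by exact_mod_cast hB
  set φ : ℕ → ℕ := fun j => ((w + (j:ℤ) * e) % (B:ℤ)).toNat with hφ
  have hmem : ∀ j ∈ range B, φ j ∈ range B := by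
    intro j _
    simp only [φ, mem_range]
    have h1 := Int.emod_nonneg (w + (j:ℤ)*e) hBZ.ne'
    have h2 := Int.emod_lt_of_pos (w + (j:ℤ)*e) hBZ
    omega
  have hinj : Set.InjOn φ (range B) := by
    intro j1 h1 j2 h2 hEq
    simp only [coe_range, Set.mem_Iio] at h1 h2
    have e1 := Int.emod_nonneg (w + (j1:ℤ)*e) hBZ.ne'
    have e2 := Int.emod_nonneg (w + (j2:ℤ)*e) hBZ.ne'
    have hm : (w + (j1:ℤ)*e) % B = (w + (j2:ℤ)*e) % B := by
      simp only [φ] at hEq; omega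
    have hdvd : ((B:ℕ):ℤ) ∣ ((j1:ℤ) - j2) * e := by
      have hsub : ((w + (j1:ℤ)*e) - (w + (j2:ℤ)*e)) % B = 0 := by
        rw [Int.sub_emod, hm, sub_self, Int.zero_emod]
      have := Int.dvd_of_emod_eq_zero hsub
      convert this using 1
      ring
    have hdvd2 : ((B:ℕ):ℤ) ∣ ((j1:ℤ) - j2) := he.dvd_of_dvd_mul_right hdvd
    rcases eq_or_ne j1 j2 with h | h
    · exact h
    · exfalso
      have hne : ((j1:ℤ) - j2) ≠ 0 := by
        intro hc; apply h; omega
      have := Int.le_of_dvd (abs_pos.mpr hne) ((dvd_abs _ _).mpr hdvd2)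
      rcases abs_cases ((j1:ℤ) - j2) with ⟨h1', _⟩ | ⟨h1', _⟩ <;> omega
  have himg : image φ (range B) = range B := by
    apply eq_of_subset_of_card_le
    · intro m hm'
      rcases mem_image.mp hm' with ⟨j, hj, rfl⟩
      exact hmem j hj
    · rw [card_image_of_injOn hinj]
  calc ∑ j ∈ range B, (w + (j:ℤ) * e) % (B:ℤ)
      = ∑ j ∈ range B, ((φ j : ℕ) : ℤ) := by
        refine sum_congr rfl fun j _ => ?_
        simp only [φ]
        rw [Int.toNat_of_nonneg (Int.emod_nonneg _ hBZ.ne')]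
    _ = ∑ m ∈ image φ (range B), (m : ℤ) := (sum_image hinj).symm
    _ = ∑ m ∈ range B, (m : ℤ) := by rw [himg]
lemma sum_emod_arith {g B : ℕ} (hg : 0 < g) (hB : 0 < B) (e w : ℤ)
    (he : IsCoprime ((B:ℕ):ℤ) e) :
    ∑ t ∈ range B, (w + (t:ℤ) * ((g:ℤ) * e)) % ((g:ℤ) * B) =
      (g:ℤ) * (∑ m ∈ range B, (m:ℤ)) + (B:ℤ) * (w % g) := by
  have hgZ : (0:ℤ) < (g:ℤ) := by exact_mod_cast hg
  have hBZ : (0:ℤ) < (B:ℤ) := by exact_mod_cast hB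
  have key : ∀ t : ℕ, (w + (t:ℤ)*((g:ℤ)*e)) % ((g:ℤ)*B)
      = (g:ℤ) * ((w / g + (t:ℤ)*e) % B) + w % g := by
    intro t
    have hw : w + (t:ℤ)*((g:ℤ)*e) = (g:ℤ) * (w / g + (t:ℤ)*e) + w % g := by
      have := Int.mul_ediv_add_emod w g
      linarith [this, mul_comm (g:ℤ) (w/g)]
    rw [hw]
    exact emod_mul_add hgZ hBZ (Int.emod_nonneg w hgZ.ne') (Int.emod_lt_of_pos w hgZ)
  simp_rw [key]
  rw [sum_add_distrib, ← mul_sum, sum_const, card_range, nsmul_eq_mul]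
  congr 2
  exact sum_emod_range hB e (w / g) he
lemma sum_range_mul_block (f : ℕ → ℤ) (m n : ℕ) :
    ∑ j ∈ range (m * n), f j = ∑ i ∈ range m, ∑ j ∈ range n, f (i * n + j) := by
  induction m with
  | zero => simp
  | succ m ih =>
      rw [Nat.succ_mul, Finset.sum_range_add, ih, Finset.sum_range_succ]
lemma aoi_sum (A B N a b n : ℕ) (ΔB ΔN l : ℕ)
    (hA : 0 < A) (hB : 0 < B) (hN : 0 < N) (ha : 0 < a) (hb : 0 < b) (hn : 0 < n)
    (h1 : Nat.Coprime (N * a) (A * b))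
    (h2 : Nat.Coprime B (N * n * A)) :
    ∃ W : ℤ, 0 ≤ W ∧ W ≤ (B:ℤ) * ((N:ℤ) * a) * ((a:ℤ) * b - 1) ∧
      ∑ k ∈ Icc 1 (a * B * N), aoiExt ((A:ℤ) * b * n) ((B:ℤ) * a * b) ((N:ℤ) * a * n) ΔB ΔN l k
        = ((a:ℤ) * B * N) * (2 + (l:ℤ) * ((N:ℤ) * a * n))
          + (B:ℤ) * ((n:ℤ) * ∑ m ∈ range (N * a), (m:ℤ))
          + (B:ℤ) * ((N:ℤ) * a) * ((-(ΔN:ℤ) - 1) % (n:ℤ))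
          + ((N:ℤ) * a) * (((a:ℤ) * b) * ∑ m ∈ range B, (m:ℤ)) + W := by
  have hAZ : (0:ℤ) < (A:ℤ) := by exact_mod_cast hA
  have hBZ : (0:ℤ) < (B:ℤ) := by exact_mod_cast hB
  have hNZ : (0:ℤ) < (N:ℤ) := by exact_mod_cast hN
  have haZ : (0:ℤ) < (a:ℤ) := by exact_mod_cast ha
  have hbZ : (0:ℤ) < (b:ℤ) := by exact_mod_cast hb
  have hnZ : (0:ℤ) < (n:ℤ) := by exact_mod_cast hn
  have habZ' : (0:ℤ) < ((a*b:ℕ):ℤ) := by exact_mod_cast Nat.mul_pos ha hb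
  have hNa : 0 < N * a := Nat.mul_pos hN ha
  have hab : 0 < a * b := Nat.mul_pos ha hb
  set A' : ℤ := (A:ℤ) * b * n with hA'
  set B' : ℤ := (B:ℤ) * a * b with hB'
  set N' : ℤ := (N:ℤ) * a * n with hN'
  have hB'pos : 0 < B' := by rw [hB']; positivity
  have hN'pos : 0 < N' := by rw [hN']; positivity
  set c : ℤ := (ΔN:ℤ) - ΔB - 1 - (l:ℤ) * N' with hc
  set Y : ℕ → ℤ := fun k => ((k:ℤ) * A' - (ΔN:ℤ) - 1) % N' with hY
  set D : ℕ → ℤ := fun k => ((k:ℤ) * A' - (ΔN:ℤ) - 1) / N' with hD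
  -- coprimality transfer
  have hcop1 : IsCoprime (((N*a : ℕ)):ℤ) (((A*b : ℕ)):ℤ) := by
    rw [Int.isCoprime_iff_gcd_eq_one, Int.gcd_natCast_natCast]
    exact h1
  have hcop2 : IsCoprime (((B : ℕ)):ℤ) (((N*n*A : ℕ)):ℤ) := by
    rw [Int.isCoprime_iff_gcd_eq_one, Int.gcd_natCast_natCast]
    exact h2
  -- pointwise decomposition
  have hpoint : ∀ k : ℕ, aoiExt A' B' N' ΔB ΔN l k
      = 2 + (l:ℤ) * N' + Y k + (N' * D k + c) % B' := by
    intro k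
    have key : (((k:ℤ)*A' - ΔB - 2 - (l:ℤ)*N') % B' - Y k) % B'
        = (N' * D k + c) % B' := by
      rw [Int.sub_emod, Int.emod_emod_of_dvd _ dvd_rfl, ← Int.sub_emod]
      congr 1
      have hYk : Y k = ((k:ℤ)*A' - (ΔN:ℤ) - 1) - N' * D k := by
        simp only [Y, D, Int.emod_def]
      rw [hYk, hc]; ring
    simp only [aoiExt]
    rw [key]
  -- reindex Icc to range
  have hIcc : ∀ f : ℕ → ℤ, ∑ k ∈ Icc 1 (a*B*N), f k = ∑ j ∈ range (a*B*N), f (1+j) := by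
    intro f
    rw [← Finset.Ico_add_one_right_eq_Icc, Finset.sum_Ico_eq_sum_range]
    simp
  -- Y sum
  have hYsum : ∑ j ∈ range (a*B*N), Y (1+j)
      = (B:ℤ) * ((n:ℤ) * ∑ m ∈ range (N*a), (m:ℤ))
        + (B:ℤ) * ((N:ℤ)*a) * ((-(ΔN:ℤ)-1) % (n:ℤ)) := by
    have hsplit : a*B*N = B * (N*a) := by ring
    rw [hsplit, sum_range_mul_block (fun j => Y (1+j)) B (N*a)]
    have hinner : ∀ i ∈ range B, ∑ j ∈ range (N*a), Y (1 + (i*(N*a) + j))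
        = (n:ℤ) * (∑ m ∈ range (N*a), (m:ℤ)) + (((N*a:ℕ)):ℤ) * ((-(ΔN:ℤ)-1) % (n:ℤ)) := by
      intro i _
      set w : ℤ := (((1 + i*(N*a) : ℕ)):ℤ) * A' - (ΔN:ℤ) - 1 with hw
      have hcongr : ∀ j ∈ range (N*a), Y (1 + (i*(N*a) + j))
          = (w + (j:ℤ) * ((n:ℤ) * (((A*b:ℕ)):ℤ))) % ((n:ℤ) * (((N*a:ℕ)):ℤ)) := by
        intro j _
        simp only [Y]
        congr 1
        · rw [hw, hA']; push_cast; ring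
        · rw [hN']; push_cast; ring
      rw [sum_congr rfl hcongr, sum_emod_arith hn hNa (((A*b:ℕ)):ℤ) w hcop1]
      congr 2
      have hwshape : w = (-(ΔN:ℤ) - 1) + ((((1 + i*(N*a) : ℕ)):ℤ) * ((A:ℤ)*b)) * n := by
        rw [hw, hA']; ring
      rw [hwshape, Int.add_mul_emod_self_right]
    rw [sum_congr rfl hinner]
    simp only [sum_add_distrib, sum_const, card_range, nsmul_eq_mul]
    push_cast
    ring
  -- R sum
  set R : ℕ → ℤ := fun j => (N' * D (1+j) + c) % B' with hR
  set w' : ℕ → ℤ := fun j0 => N' * D (1+j0) + c with hw'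
  have hRinner : ∀ j0 ∈ range (N*a), ∑ t ∈ range B, R (t*(N*a) + j0)
      = (((a*b:ℕ)):ℤ) * (∑ m ∈ range B, (m:ℤ)) + (B:ℤ) * (w' j0 % ((a*b:ℕ):ℤ)) := by
    intro j0 _
    have hDstep : ∀ t : ℕ, D (1 + (t*(N*a) + j0)) = D (1+j0) + (t:ℤ) * (((A*b:ℕ)):ℤ) := by
      intro t
      have hnum : ((1 + (t*(N*a) + j0) : ℕ):ℤ) * A' - (ΔN:ℤ) - 1
          = ((((1+j0 : ℕ)):ℤ) * A' - (ΔN:ℤ) - 1) + ((t:ℤ) * (((A*b:ℕ)):ℤ)) * N' := by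
        rw [hA', hN']; push_cast; ring
      simp only [D]
      rw [hnum, Int.add_mul_ediv_right _ _ hN'pos.ne']
    have hcongr : ∀ t ∈ range B, R (t*(N*a) + j0)
        = (w' j0 + (t:ℤ) * ((((a*b:ℕ)):ℤ) * (((N*n*A:ℕ)):ℤ))) % ((((a*b:ℕ)):ℤ) * (B:ℤ)) := by
      intro t _
      simp only [R]
      congr 1
      · rw [hDstep t, hw']
        simp only
        rw [hN']; push_cast; ring
      · rw [hB']; push_cast; ring
    rw [sum_congr rfl hcongr, sum_emod_arith hab hB (((N*n*A:ℕ)):ℤ) (w' j0) hcop2]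
  have hRsum : ∑ j ∈ range (a*B*N), R j
      = (((N*a:ℕ)):ℤ) * ((((a*b:ℕ)):ℤ) * (∑ m ∈ range B, (m:ℤ)))
        + (B:ℤ) * ∑ j0 ∈ range (N*a), (w' j0 % ((a*b:ℕ):ℤ)) := by
    have hsplit : a*B*N = B * (N*a) := by ring
    rw [hsplit, sum_range_mul_block R B (N*a), Finset.sum_comm]
    rw [sum_congr rfl hRinner]
    simp only [sum_add_distrib, sum_const, card_range, nsmul_eq_mul, mul_sum]
  refine ⟨(B:ℤ) * ∑ j0 ∈ range (N*a), (w' j0 % ((a*b:ℕ):ℤ)), ?_, ?_, ?_⟩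
  · apply mul_nonneg hBZ.le
    apply sum_nonneg
    intro j0 _
    exact Int.emod_nonneg _ habZ'.ne'
  · calc (B:ℤ) * ∑ j0 ∈ range (N*a), (w' j0 % ((a*b:ℕ):ℤ))
        ≤ (B:ℤ) * ∑ j0 ∈ range (N*a), (((a*b:ℕ):ℤ) - 1) := by
          apply mul_le_mul_of_nonneg_left _ hBZ.le
          apply sum_le_sum
          intro j0 _
          have := Int.emod_lt_of_pos (w' j0) habZ'
          omega
      _ = (B:ℤ) * ((N:ℤ) * a) * ((a:ℤ) * b - 1) := by
          rw [sum_const, card_range, nsmul_eq_mul]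
          push_cast
          ring
  · rw [hIcc, sum_congr rfl (fun j _ => hpoint (1+j))]
    have : ∀ j ∈ range (a*B*N),
        2 + (l:ℤ) * N' + Y (1+j) + (N' * D (1+j) + c) % B'
          = (2 + (l:ℤ) * N') + (Y (1+j) + R j) := by
      intro j _
      simp only [R]
      ring
    rw [sum_congr rfl this]
    simp only [sum_add_distrib, sum_const, card_range, nsmul_eq_mul]
    rw [hYsum, hRsum, hN']
    push_cast
    ring

lemma ceil_div_eq (m : ℤ) (n : ℕ) (hn : 0 < n) :
    ⌈(m : ℚ) / (n : ℚ)⌉ = -((-m) / (n:ℤ)) := by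
  have hnQ : (0:ℚ) < (n:ℚ) := by exact_mod_cast hn
  have hnZ : (0:ℤ) < (n:ℤ) := by exact_mod_cast hn
  set z : ℤ := -((-m) / (n:ℤ)) with hz
  have hdm := Int.mul_ediv_add_emod (-m) (n:ℤ)
  have hr0 := Int.emod_nonneg (-m) hnZ.ne'
  have hrn := Int.emod_lt_of_pos (-m) hnZ
  rw [Int.ceil_eq_iff]
  constructor
  · rw [show ((z:ℚ) - 1) = ((z - 1 : ℤ) : ℚ) by push_cast; ring, lt_div_iff₀ hnQ]
    exact_mod_cast (by nlinarith [hdm, hr0, hrn] : (z - 1) * n < m)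
  · rw [div_le_iff₀ hnQ]
    exact_mod_cast (by nlinarith [hdm, hr0] : m ≤ z * n)
lemma extK_eq (ΔN n : ℕ) (hn : 0 < n) :
    extK ΔN n = 2 + (-(ΔN:ℤ) - 1) % (n:ℤ) := by
  have hc : (((ΔN:ℚ)) + 1) = (((ΔN:ℤ) + 1 : ℤ) : ℚ) := by push_cast; ring
  rw [extK, hc, ceil_div_eq ((ΔN:ℤ) + 1) n hn]
  have h1 : (-(ΔN:ℤ) - 1) = -((ΔN:ℤ)+1) := by ring
  rw [h1, Int.emod_def]
  ring
lemma gaussR (P : ℕ) (hP : 0 < P) :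
    ∑ m ∈ range P, (m:ℝ) = (P:ℝ) * ((P:ℝ) - 1) / 2 := by
  have h2 := Finset.sum_range_id_mul_two P
  have h3 : ((∑ i ∈ range P, i : ℕ):ℝ) * 2 = (P:ℝ) * ((P:ℝ) - 1) := by
    rw [show ((∑ i ∈ range P, i : ℕ):ℝ) * 2 = (((∑ i ∈ range P, i) * 2 : ℕ):ℝ) by push_cast; ring,
      h2]
    push_cast [Nat.cast_sub hP]
    ring
  rw [Nat.cast_sum] at h3
  linarith

set_option maxHeartbeats 2000000 in
/-- Corollary 2, eq. (17): with transmission success probability `p`, the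
series `E = Σ_l p·p̄^l·S_l` converges and lies within `±a·b/2` around
`(B' + N' − n)/2 + K + (p̄/p)·N'`. -/
theorem stmt15 (A B N a b n : ℕ) (hA : 0 < A) (hB : 0 < B) (hN : 0 < N)
    (hapos : 0 < a) (hbpos : 0 < b) (hnpos : 0 < n)
    (ha : a = Nat.gcd (B * a * b) (N * a * n))
    (hb : b = Nat.gcd (A * b * n) (B * a * b))
    (hn : n = Nat.gcd (A * b * n) (N * a * n))
    (ΔB ΔN : ℕ) (p : ℝ) (hp0 : 0 < p) (hp1 : p ≤ 1) :
    Summable (fun l : ℕ => p * (1 - p) ^ l * meanAoiExt A B N a b n ΔB ΔN l) ∧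
      ((B : ℝ) * a * b + (N : ℝ) * a * n - n) / 2 + (extK ΔN n : ℝ) +
          ((1 - p) / p) * ((N : ℝ) * a * n) - (a : ℝ) * b / 2 ≤
        (∑' l : ℕ, p * (1 - p) ^ l * meanAoiExt A B N a b n ΔB ΔN l) ∧
      (∑' l : ℕ, p * (1 - p) ^ l * meanAoiExt A B N a b n ΔB ΔN l) ≤
        ((B : ℝ) * a * b + (N : ℝ) * a * n - n) / 2 + (extK ΔN n : ℝ) +
          ((1 - p) / p) * ((N : ℝ) * a * n) + (a : ℝ) * b / 2 := by
  -- coprimality facts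
  have hgn : Nat.gcd (A*b) (N*a) = 1 := by
    have e1 : A*b*n = n*(A*b) := by ring
    have e2 : N*a*n = n*(N*a) := by ring
    rw [e1, e2, Nat.gcd_mul_left] at hn
    exact Nat.eq_of_mul_eq_mul_left hnpos (by omega)
  have hga : Nat.gcd (B*b) (N*n) = 1 := by
    have e1 : B*a*b = a*(B*b) := by ring
    have e2 : N*a*n = a*(N*n) := by ring
    rw [e1, e2, Nat.gcd_mul_left] at ha
    exact Nat.eq_of_mul_eq_mul_left hapos (by omega)
  have hgb : Nat.gcd (A*n) (B*a) = 1 := by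
    have e1 : A*b*n = b*(A*n) := by ring
    have e2 : B*a*b = b*(B*a) := by ring
    rw [e1, e2, Nat.gcd_mul_left] at hb
    exact Nat.eq_of_mul_eq_mul_left hbpos (by omega)
  have h1 : Nat.Coprime (N*a) (A*b) := (Nat.coprime_iff_gcd_eq_one.mpr hgn).symm
  have hBNn : Nat.Coprime B (N*n) :=
    Nat.Coprime.coprime_dvd_left (dvd_mul_right B b) (Nat.coprime_iff_gcd_eq_one.mpr hga).symm.symm
  have hBA : Nat.Coprime B A := by
    have h' : Nat.Coprime (B*a) (A*n) := (Nat.coprime_iff_gcd_eq_one.mpr hgb).symm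
    have h'' : Nat.Coprime B (A*n) := Nat.Coprime.coprime_dvd_left (dvd_mul_right B a) h'
    exact Nat.Coprime.coprime_dvd_right (dvd_mul_right A n) h''
  have h2 : Nat.Coprime B (N*n*A) := Nat.Coprime.mul_right hBNn hBA
  have hBNnfix : Nat.Coprime B (N*n) := by
    have h' : Nat.Coprime (B*b) (N*n) := Nat.coprime_iff_gcd_eq_one.mpr hga
    exact Nat.Coprime.coprime_dvd_left (dvd_mul_right B b) h'
  -- positivity
  have hBR : (0:ℝ) < (B:ℝ) := by exact_mod_cast hB
  have hNR : (0:ℝ) < (N:ℝ) := by exact_mod_cast hN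
  have haR : (0:ℝ) < (a:ℝ) := by exact_mod_cast hapos
  have hbR : (0:ℝ) < (b:ℝ) := by exact_mod_cast hbpos
  have hnR : (0:ℝ) < (n:ℝ) := by exact_mod_cast hnpos
  have hMR : (0:ℝ) < (a:ℝ)*B*N := by positivity
  -- the s constant
  have hs0 : (0:ℝ) ≤ (((-(ΔN:ℤ) - 1) % (n:ℤ) : ℤ) : ℝ) := by
    have := Int.emod_nonneg (-(ΔN:ℤ) - 1) (by exact_mod_cast hnpos.ne' : ((n:ℤ)) ≠ 0)
    exact_mod_cast this
  set s : ℝ := (((-(ΔN:ℤ) - 1) % (n:ℤ) : ℤ) : ℝ) with hsdef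
  set C0 : ℝ := 2 + s + ((N:ℝ)*a*n - n)/2 + ((B:ℝ)*a*b - (a:ℝ)*b)/2 with hC0def
  have hC0 : 0 ≤ C0 := by
    have hN1 : (1:ℝ) ≤ (N:ℝ) := by exact_mod_cast hN
    have ha1 : (1:ℝ) ≤ (a:ℝ) := by exact_mod_cast hapos
    have hB1 : (1:ℝ) ≤ (B:ℝ) := by exact_mod_cast hB
    have hNa1 : (1:ℝ) ≤ (N:ℝ)*(a:ℝ) := by nlinarith
    have h1' : (n:ℝ) ≤ (N:ℝ)*a*n := by nlinarith
    have h2' : (a:ℝ)*b ≤ (B:ℝ)*a*b := by nlinarith [mul_pos haR hbR]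
    rw [hC0def]
    linarith [hs0]
  -- mean formula
  have hmean : ∀ l : ℕ, ∃ ρ : ℝ, 0 ≤ ρ ∧ ρ ≤ (a:ℝ)*b - 1 ∧
      meanAoiExt A B N a b n ΔB ΔN l = C0 + ((N:ℝ)*a*n) * l + ρ := by
    intro l
    obtain ⟨W, hW0, hWle, hEq⟩ := aoi_sum A B N a b n ΔB ΔN l hA hB hN hapos hbpos hnpos h1 h2
    refine ⟨(W:ℝ)/((a:ℝ)*B*N), by positivity, ?_, ?_⟩
    · rw [div_le_iff₀ hMR]
      calc (W:ℝ) ≤ ((B:ℤ) * ((N:ℤ) * a) * ((a:ℤ) * b - 1) : ℤ) := by exact_mod_cast hWle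
        _ = ((a:ℝ)*b - 1) * ((a:ℝ)*B*N) := by push_cast; ring
    · have hcast : ((∑ k ∈ Finset.Icc 1 (a*B*N),
            aoiExt ((A:ℤ)*b*n) ((B:ℤ)*a*b) ((N:ℤ)*a*n) ΔB ΔN l k : ℤ) : ℝ)
          = ((a:ℝ)*B*N) * ((C0 + ((N:ℝ)*a*n)*l)) + (W:ℝ) := by
        rw [hEq, hC0def, hsdef]
        push_cast
        rw [gaussR (N*a) (Nat.mul_pos hN hapos), gaussR B hB]
        push_cast
        ring
      simp only [meanAoiExt]
      rw [← Int.cast_sum, hcast, mul_add]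
      congr 1
      · rw [← mul_assoc, one_div, inv_mul_cancel₀ hMR.ne', one_mul]
      · rw [one_div, inv_mul_eq_div]
  -- series setup
  set q : ℝ := 1 - p with hqdef
  have hq0 : 0 ≤ q := by rw [hqdef]; linarith
  have hq1 : q < 1 := by rw [hqdef]; linarith
  have hqn : ‖q‖ < 1 := by rw [Real.norm_eq_abs, abs_of_nonneg hq0]; exact hq1
  have hgeo : Summable (fun l : ℕ => q ^ l) := summable_geometric_of_lt_one hq0 hq1
  have hlin : Summable (fun l : ℕ => (l:ℝ) * q ^ l) := by
    simpa using summable_pow_mul_geometric_of_norm_lt_one 1 hqn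
  have hgeoval : ∑' l : ℕ, q ^ l = (1 - q)⁻¹ := tsum_geometric_of_lt_one hq0 hq1
  have hlinval : ∑' l : ℕ, (l:ℝ) * q ^ l = q / (1 - q) ^ 2 :=
    tsum_coe_mul_geometric_of_norm_lt_one hqn
  set lo : ℕ → ℝ := fun l => (p * C0) * q ^ l + (p * ((N:ℝ)*a*n)) * ((l:ℝ) * q ^ l) with hlodef
  set hi : ℕ → ℝ := fun l =>
    (p * (C0 + ((a:ℝ)*b - 1))) * q ^ l + (p * ((N:ℝ)*a*n)) * ((l:ℝ) * q ^ l) with hhidef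
  have hlosum : Summable lo := (hgeo.mul_left _).add (hlin.mul_left _)
  have hhisum : Summable hi := (hgeo.mul_left _).add (hlin.mul_left _)
  set f : ℕ → ℝ := fun l => p * q ^ l * meanAoiExt A B N a b n ΔB ΔN l with hfdef
  have hpq : ∀ l : ℕ, (0:ℝ) ≤ p * q ^ l := fun l => mul_nonneg hp0.le (pow_nonneg hq0 l)
  have hlef : ∀ l, lo l ≤ f l := by
    intro l
    obtain ⟨ρ, hρ0, hρ1, hm⟩ := hmean l
    rw [hfdef, hlodef]
    simp only
    rw [hm]
    nlinarith [hpq l, hρ0]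
  have hfle : ∀ l, f l ≤ hi l := by
    intro l
    obtain ⟨ρ, hρ0, hρ1, hm⟩ := hmean l
    rw [hfdef, hhidef]
    simp only
    rw [hm]
    nlinarith [hpq l, hρ1]
  have hlo0 : ∀ l, 0 ≤ lo l := by
    intro l
    rw [hlodef]
    simp only
    have t1 : (0:ℝ) ≤ (p * C0) * q ^ l :=
      mul_nonneg (mul_nonneg hp0.le hC0) (pow_nonneg hq0 l)
    have t2 : (0:ℝ) ≤ (p * ((N:ℝ)*a*n)) * ((l:ℝ) * q ^ l) :=
      mul_nonneg (mul_nonneg hp0.le (by positivity)) (mul_nonneg (Nat.cast_nonneg l)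
        (pow_nonneg hq0 l))
    linarith
  have hfsum : Summable f := Summable.of_nonneg_of_le
    (fun l => le_trans (hlo0 l) (hlef l)) hfle hhisum
  have hloval : ∑' l, lo l = C0 + ((N:ℝ)*a*n) * (q / p) := by
    rw [hlodef, Summable.tsum_add (hgeo.mul_left _) (hlin.mul_left _), tsum_mul_left, tsum_mul_left,
      hgeoval, hlinval]
    have hp1q : 1 - q = p := by rw [hqdef]; ring
    rw [hp1q]
    field_simp
  have hhival : ∑' l, hi l = C0 + ((a:ℝ)*b - 1) + ((N:ℝ)*a*n) * (q / p) := by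
    rw [hhidef, Summable.tsum_add (hgeo.mul_left _) (hlin.mul_left _), tsum_mul_left, tsum_mul_left,
      hgeoval, hlinval]
    have hp1q : 1 - q = p := by rw [hqdef]; ring
    rw [hp1q]
    field_simp
  have hKval : ((extK ΔN n : ℤ) : ℝ) = 2 + s := by
    rw [extK_eq ΔN n hnpos]
    rw [hsdef]
    push_cast
    ring
  refine ⟨hfsum, ?_, ?_⟩
  · have := Summable.tsum_le_tsum hlef hlosum hfsum
    rw [hloval] at this
    rw [hKval]
    calc ((B:ℝ)*a*b + (N:ℝ)*a*n - n)/2 + (2 + s) + ((1-p)/p) * ((N:ℝ)*a*n) - (a:ℝ)*b/2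
        = C0 + ((N:ℝ)*a*n) * (q/p) := by rw [hC0def, hqdef]; ring
      _ ≤ _ := this
  · have := Summable.tsum_le_tsum hfle hfsum hhisum
    rw [hhival] at this
    rw [hKval]
    calc (∑' l, f l) ≤ C0 + ((a:ℝ)*b - 1) + ((N:ℝ)*a*n) * (q/p) := this
      _ ≤ ((B:ℝ)*a*b + (N:ℝ)*a*n - n)/2 + (2 + s) + ((1-p)/p) * ((N:ℝ)*a*n) + (a:ℝ)*b/2 := by
          rw [hC0def, hqdef]
          nlinarith [hbR, haR]
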